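/- Suppose α is an irrational real number that is not a Liouville number. Then there exist a constant C > 0 and a positive integer N such that for all real x, |sin x|/|x| + |sin(α x)|/|x| ≥ C·(1+|x|)^(−N) (interpreting the left side by continuity at x = 0, i.e. as 1 + |α| at x = 0). -/

import Mathlib

open Real

private lemma sin_lower (x : ℝ) :
    2 / π * |x - round (x / π) * π| ≤ |Real.sin x| := by
  have hπ := Real.pi_pos
  have h1 : |x / π - round (x / π)| ≤ 1 / 2 := abs_sub_round _
  have h2 : |x - round (x / π) * π| ≤ π / 2 :=  by
    have e : x - round (x / π) * π = (x / π - round (x / π)) * π := by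
      rw [sub_mul, div_mul_cancel₀ _ hπ.ne']
    rw [e, abs_mul, abs_of_pos hπ]
    calc |x / π - (round (x / π) : ℝ)| * π ≤ 1 / 2 * π := by gcongr
      _ = π / 2 := by ring
  have h4 : |Real.sin (x - round (x / π) * π)| = |Real.sin x| := by
    rw [Real.sin_sub_int_mul_pi, abs_mul]
    rcases Int.even_or_odd (round (x / π)) with he | ho
    · rw [he.neg_one_zpow, abs_one, one_mul]
    · rw [ho.neg_one_zpow, abs_neg, abs_one, one_mul]
  calc 2 / π * |x - round (x / π) * π| ≤ |Real.sin (x - round (x / π) * π)| :=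
        Real.mul_abs_le_abs_sin h2
    _ = |Real.sin x| := h4

private lemma int_dist {α : ℝ} (hirr : Irrational α) :
    ∃ δ : ℝ, 0 < δ ∧ δ ≤ 1 ∧ ∀ k : ℤ, δ ≤ |α - k| := by
  have hfl := Int.floor_add_fract α
  have h0 : 0 < Int.fract α := by
    rcases (Int.fract_nonneg α).lt_or_eq with h | h
    · exact h
    · exact absurd (by linarith : α = (⌊α⌋ : ℝ)) (hirr.ne_int ⌊α⌋)
  have h1 : Int.fract α < 1 := Int.fract_lt_one α
  refine ⟨min (Int.fract α) (1 - Int.fract α), lt_min h0 (by linarith), by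
    simpa using min_le_of_left_le h1.le, ?_⟩
  intro k
  rcases le_or_gt k ⌊α⌋ with h | h
  · have hk : (k : ℝ) ≤ (⌊α⌋ : ℝ) := by exact_mod_cast h
    calc min (Int.fract α) (1 - Int.fract α) ≤ Int.fract α := min_le_left _ _
      _ ≤ α - k := by linarith
      _ ≤ |α - k| := le_abs_self _
  · have hk : (⌊α⌋ : ℝ) + 1 ≤ (k : ℝ) := by exact_mod_cast h
    calc min (Int.fract α) (1 - Int.fract α) ≤ 1 - Int.fract α := min_le_right _ _
      _ ≤ (k : ℝ) - α := by linarith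
      _ = -(α - k) := by ring
      _ ≤ |α - k| := neg_le_abs _

private lemma dio {α : ℝ} (hirr : Irrational α) (hL : ¬ Liouville α) :
    ∃ c : ℝ, 0 < c ∧ c ≤ 1 ∧ ∃ N : ℕ,
      ∀ m n : ℤ, m ≠ 0 → c / |(m : ℝ)| ^ N ≤ |α * m - n| := by
  obtain ⟨δ, hδ0, hδ1, hδ⟩ := int_dist hirr
  rw [Liouville] at hL; push_neg at hL
  obtain ⟨N, hN⟩ := hL
  refine ⟨δ, hδ0, hδ1, N, ?_⟩
  intro m n hm
  have hm1 : (1 : ℝ) ≤ |(m : ℝ)| := by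
    rw [← Int.cast_abs]
    exact_mod_cast Int.one_le_abs hm
  rcases eq_or_lt_of_le (Int.one_le_abs hm) with h1 | h2
  · -- |m| = 1
    have hmm : m = 1 ∨ m = -1 := (abs_eq (by norm_num : (0:ℤ) ≤ 1)).1 h1.symm
    have habs : |(m : ℝ)| = 1 := by
      rcases hmm with rfl | rfl <;> norm_num
    rw [habs, one_pow, div_one]
    rcases hmm with rfl | rfl
    · simpa using hδ n
    · have h5 : α * ((-1 : ℤ) : ℝ) - n = -(α - ((-n : ℤ) : ℝ)) := by push_cast; ring
      rw [h5, abs_neg]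
      exact hδ (-n)
  · -- |m| ≥ 2
    have hP : (0 : ℝ) < |(m : ℝ)| ^ N := by positivity
    have key : 1 / |(m : ℝ)| ^ N ≤ |α - (n : ℝ) / (m : ℝ)| := by
      rcases lt_abs.1 h2 with hpos | hneg
      · have hb : 1 < m := hpos
        have hne : α ≠ (n : ℝ) / (m : ℝ) := by
          intro h
          exact hirr ⟨(n : ℚ) / (m : ℚ), by rw [h]; push_cast; ring⟩
        have := hN n m hb hne
        have hmp : (0 : ℝ) < (m : ℝ) := by exact_mod_cast (by omega : (0:ℤ) < m)
        rwa [abs_of_pos hmp]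
      · have hb : 1 < -m := hneg
        have hne : α ≠ ((-n : ℤ) : ℝ) / ((-m : ℤ) : ℝ) := by
          intro h
          exact hirr ⟨(-n : ℚ) / (-m : ℚ), by rw [h]; push_cast; ring⟩
        have h9 := hN (-n) (-m) hb hne
        have e1 : ((-n : ℤ) : ℝ) / ((-m : ℤ) : ℝ) = (n : ℝ) / (m : ℝ) := by
          push_cast; rw [neg_div_neg_eq]
        have hmn : (m : ℝ) < 0 := by exact_mod_cast (by omega : m < (0:ℤ))
        have e2 : |(m : ℝ)| = ((-m : ℤ) : ℝ) := by
          push_cast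
          rw [abs_of_neg hmn]
        rw [e1] at h9
        rw [e2]
        exact h9
    have hm0 : (m : ℝ) ≠ 0 := Int.cast_ne_zero.2 hm
    have e3 : α * m - n = (α - (n : ℝ) / (m : ℝ)) * m := by field_simp
    rw [e3, abs_mul]
    calc δ / |(m : ℝ)| ^ N ≤ 1 / |(m : ℝ)| ^ N := by gcongr
      _ ≤ |α - (n : ℝ) / (m : ℝ)| := key
      _ ≤ |α - (n : ℝ) / (m : ℝ)| * |(m : ℝ)| :=
          le_mul_of_one_le_right (abs_nonneg _) hm1

/-- If α is irrational and not Liouville, then there are C > 0 and a positive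
integer N such that |sin x|/|x| + |sin(α x)|/|x| ≥ C(1+|x|)^(−N) for all real x,
the left side being interpreted as 1 + |α| at x = 0. -/
theorem stmt6 {α : ℝ} (hirr : Irrational α) (hL : ¬ Liouville α) :
    ∃ C : ℝ, 0 < C ∧ ∃ N : ℕ, 0 < N ∧ ∀ x : ℝ,
      (if x = 0 then 1 + |α|
        else |Real.sin x| / |x| + |Real.sin (α * x)| / |x|) ≥
        C * (1 + |x|) ^ (-(N : ℤ)) := by
  obtain ⟨c, hc0, hc1, N, hdio⟩ := dio hirr hL
  have hπ := Real.pi_pos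
  have hπ1 : (1 : ℝ) < π := by linarith [Real.pi_gt_three]
  set M : ℝ := max |α| 1 with hM
  have hM1 : (1 : ℝ) ≤ M := le_max_right _ _
  have hM0 : (0 : ℝ) < M := by linarith
  set C : ℝ := min (2 * c / M) (min (2 / π) 1) with hC
  have hC0 : 0 < C := by positivity
  have hCc : C ≤ 2 * c / M := min_le_left _ _
  have hCπ : C ≤ 2 / π := le_trans (min_le_right _ _) (min_le_left _ _)
  have hC1 : C ≤ 1 := le_trans (min_le_right _ _) (min_le_right _ _)
  refine ⟨C, hC0, N + 1, Nat.succ_pos _, ?_⟩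
  intro x
  have hx1 : (1 : ℝ) ≤ 1 + |x| := by simp [abs_nonneg]
  have hpow1 : (1 : ℝ) ≤ (1 + |x|) ^ (N + 1) := one_le_pow₀ hx1
  rw [ge_iff_le, zpow_neg, zpow_natCast, ← div_eq_mul_inv]
  by_cases hx : x = 0
  · subst hx
    norm_num
    linarith [abs_nonneg α]
  · rw [if_neg hx]
    have hx0 : 0 < |x| := abs_pos.2 hx
    have hA := sin_lower x
    have hB := sin_lower (α * x)
    set m : ℤ := round (x / π) with hm
    set n : ℤ := round (α * x / π) with hn
    set A : ℝ := |x - (m : ℝ) * π| with hA'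
    set B : ℝ := |α * x - (n : ℝ) * π| with hB'
    have hsum : 2 / π * (A + B) / |x| ≤ |Real.sin x| / |x| + |Real.sin (α * x)| / |x| := by
      rw [← add_div]
      gcongr
      linarith
    by_cases hm0 : m = 0
    · -- round(x/π) = 0 : |sin x|/|x| ≥ 2/π
      have hA2 : 2 / π * |x| ≤ |Real.sin x| := by
        have h5 := sin_lower x
        rw [← hm, hm0] at h5
        simpa using h5
      have h2π : 2 / π ≤ |Real.sin x| / |x| := (le_div_iff₀ hx0).2 hA2
      calc C / (1 + |x|) ^ (N + 1) ≤ C := div_le_self hC0.le hpow1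
        _ ≤ 2 / π := hCπ
        _ ≤ |Real.sin x| / |x| := h2π
        _ ≤ |Real.sin x| / |x| + |Real.sin (α * x)| / |x| :=
            le_add_of_nonneg_right (by positivity)
    · -- main case
      have hmabs : (1 : ℝ) ≤ |(m : ℝ)| := by
        rw [← Int.cast_abs]
        exact_mod_cast Int.one_le_abs hm0
      set P : ℝ := |(m : ℝ)| ^ N with hP'
      have hP : 0 < P := by positivity
      set E : ℝ := |α * (m : ℝ) - (n : ℝ)| with hE'
      have key2 : c / P ≤ E := hdio m n hm0
      have key1 : π * E ≤ M * (A + B) := by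
        have e1 : (α * (m : ℝ) - n) * π = α * ((m : ℝ) * π - x) + (α * x - (n : ℝ) * π) := by
          ring
        calc π * E = |(α * (m : ℝ) - n) * π| := by
              rw [abs_mul, abs_of_pos hπ, mul_comm]
          _ = |α * ((m : ℝ) * π - x) + (α * x - (n : ℝ) * π)| := by rw [e1]
          _ ≤ |α * ((m : ℝ) * π - x)| + |α * x - (n : ℝ) * π| := abs_add_le _ _
          _ = |α| * A + B := by rw [abs_mul, abs_sub_comm]
          _ ≤ M * A + M * B :=
              add_le_add (mul_le_mul_of_nonneg_right (le_max_left _ _) (abs_nonneg _))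
                (le_mul_of_one_le_left (abs_nonneg _) hM1)
          _ = M * (A + B) := by ring
      have hmbound : |(m : ℝ)| ≤ 1 + |x| := by
        have h1 : |x / π - (m : ℝ)| ≤ 1 / 2 := abs_sub_round _
        have hxπ : |x / π| ≤ |x| := by
          rw [abs_div, abs_of_pos hπ]
          exact div_le_self (abs_nonneg _) hπ1.le
        rw [abs_le] at h1 hxπ ⊢
        constructor <;> [linarith [h1.2, hxπ.1]; linarith [h1.1, hxπ.2]]
      have hpowle : P * |x| ≤ (1 + |x|) ^ (N + 1) := by
        calc P * |x| ≤ (1 + |x|) ^ N * (1 + |x|) := by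
              apply mul_le_mul _ (by linarith) (abs_nonneg _) (by positivity)
              exact pow_le_pow_left₀ (abs_nonneg _) hmbound N
          _ = (1 + |x|) ^ (N + 1) := by ring
      have hwant : 2 * c / M / P ≤ 2 / π * (A + B) := by
        rw [div_div, div_le_iff₀ (by positivity)]
        have h' : π * c ≤ M * (A + B) * P := by
          have : π * (c / P) ≤ M * (A + B) := le_trans (by gcongr) key1
          rwa [← mul_div_assoc, div_le_iff₀ hP] at this
        calc 2 * c = 2 / π * (π * c) := by field_simp
          _ ≤ 2 / π * (M * (A + B) * P) := by gcongr
          _ = 2 / π * (A + B) * (M * P) := by ring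
      calc C / (1 + |x|) ^ (N + 1) ≤ (2 * c / M) / (P * |x|) := by
            apply div_le_div₀ (by positivity) hCc (by positivity) hpowle
        _ = (2 * c / M / P) / |x| := by ring
        _ ≤ (2 / π * (A + B)) / |x| := by gcongr
        _ ≤ |Real.sin x| / |x| + |Real.sin (α * x)| / |x| := hsum
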